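/- Let T > 0 and T* > 0. Let a : ℝ × ℝ → ℝ be continuously differentiable and let h, n : ℝ × ℝ → ℝ be continuous. Assume that for all (x, t) ∈ [0, T*] × [0, T]: (i) ∂₁a(x, t) + ∂₂a(x, t) = −a(x, t)·h(x, t); (ii) a(0, t) = ∫_0^{T*} n(x, t)·a(x, t) dx; and (iii) a(T*, t) = 0. Then for every continuously differentiable f : ℝ → ℝ and every t ∈ [0, T], ∫_0^{T*} f(x) a(x, t) dx = ∫_0^{T*} f(x) a(x, 0) dx + ∫_0^t ( ∫_0^{T*} ( f'(x) − h(x, s) f(x) ) a(x, s) dx + f(0) · ∫_0^{T*} n(x, s) a(x, s) dx ) ds. -/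

import Mathlib

open MeasureTheory intervalIntegral Set Metric

/-- McKendrick–von Foerster equation implies its weak (test-function) form:
if the density `a(x,t)` satisfies `∂₁a + ∂₂a = −a·h` on `[0,T*]×[0,T]`, the
renewal boundary condition `a(0,t) = ∫₀^{T*} n(x,t)a(x,t)dx`, and `a(T*,t) = 0`,
then for every `C¹` test function `f` and `t ∈ [0,T]`,
`(f, a(·,t)) = (f, a(·,0)) + ∫₀^t ((f' − h f, a(·,s)) + f(0)(n, a(·,s))) ds`. -/
theorem stmt8 (T Tstar : ℝ) (hT : 0 < T) (hTs : 0 < Tstar)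
    (a h n : ℝ × ℝ → ℝ) (ha : ContDiff ℝ 1 a) (hh : Continuous h) (hn : Continuous n)
    (hpde : ∀ x ∈ Set.Icc (0:ℝ) Tstar, ∀ t ∈ Set.Icc (0:ℝ) T,
      fderiv ℝ a (x, t) (1, 0) + fderiv ℝ a (x, t) (0, 1) = -(a (x, t) * h (x, t)))
    (hbc : ∀ t ∈ Set.Icc (0:ℝ) T,
      a (0, t) = ∫ x in (0:ℝ)..Tstar, n (x, t) * a (x, t))
    (hend : ∀ t ∈ Set.Icc (0:ℝ) T, a (Tstar, t) = 0)
    (f : ℝ → ℝ) (hf : ContDiff ℝ 1 f) (t : ℝ) (htT : t ∈ Set.Icc (0:ℝ) T) :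
    ∫ x in (0:ℝ)..Tstar, f x * a (x, t)
      = (∫ x in (0:ℝ)..Tstar, f x * a (x, 0))
        + ∫ s in (0:ℝ)..t,
            ((∫ x in (0:ℝ)..Tstar, (deriv f x - h (x, s) * f x) * a (x, s))
              + f 0 * ∫ x in (0:ℝ)..Tstar, n (x, s) * a (x, s)) := by
  have haC : Continuous a := ha.continuous
  have hfdC : Continuous (fderiv ℝ a) := ha.continuous_fderiv one_ne_zero
  have hfc : Continuous f := hf.continuous
  have hf'c : Continuous (deriv f) := hf.continuous_deriv le_rfl
  set da1 : ℝ × ℝ → ℝ := fun p => fderiv ℝ a p (1, 0) with hda1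
  set da2 : ℝ × ℝ → ℝ := fun p => fderiv ℝ a p (0, 1) with hda2
  have c1 : Continuous da1 := hfdC.clm_apply continuous_const
  have c2 : Continuous da2 := hfdC.clm_apply continuous_const
  have haD : Differentiable ℝ a := ha.differentiable one_ne_zero
  -- derivative of `t ↦ a (x,t)`
  have hd2 : ∀ (x τ : ℝ), HasDerivAt (fun τ => a (x, τ)) (da2 (x, τ)) τ := by
    intro x τ
    have h1 : HasDerivAt (fun τ : ℝ => ((x, τ) : ℝ × ℝ)) (0, 1) τ :=
      (hasDerivAt_const τ x).prodMk (hasDerivAt_id τ)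
    exact ((haD (x, τ)).hasFDerivAt.comp_hasDerivAt τ h1)
  have hd1 : ∀ (x τ : ℝ), HasDerivAt (fun x => a (x, τ)) (da1 (x, τ)) x := by
    intro x τ
    have h1 : HasDerivAt (fun x : ℝ => ((x, τ) : ℝ × ℝ)) (1, 0) x :=
      (hasDerivAt_id x).prodMk (hasDerivAt_const x τ)
    exact ((haD (x, τ)).hasFDerivAt.comp_hasDerivAt x h1)
  set g : ℝ → ℝ := fun s =>
      ((∫ x in (0:ℝ)..Tstar, (deriv f x - h (x, s) * f x) * a (x, s))
        + f 0 * ∫ x in (0:ℝ)..Tstar, n (x, s) * a (x, s)) with hg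
  -- main derivative computation
  have key : ∀ s ∈ Set.Icc (0:ℝ) T,
      HasDerivAt (fun τ => ∫ x in (0:ℝ)..Tstar, f x * a (x, τ)) (g s) s := by
    intro s hs
    -- Step A: differentiate under the integral sign
    have stepA : HasDerivAt (fun τ => ∫ x in (0:ℝ)..Tstar, f x * a (x, τ))
        (∫ x in (0:ℝ)..Tstar, f x * da2 (x, s)) s := by
      have cF : ∀ τ : ℝ, Continuous fun x => f x * a (x, τ) := fun τ =>
        hfc.mul (haC.comp (continuous_id.prodMk continuous_const))
      have cF' : ∀ τ : ℝ, Continuous fun x => f x * da2 (x, τ) := fun τ =>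
        hfc.mul (c2.comp (continuous_id.prodMk continuous_const))
      obtain ⟨C, hC⟩ : ∃ C, ∀ p ∈ (Set.uIcc (0:ℝ) Tstar) ×ˢ (Set.Icc (s-1) (s+1)),
          ‖f p.1 * da2 p‖ ≤ C :=
        (isCompact_uIcc.prod isCompact_Icc).exists_bound_of_continuousOn
          ((hfc.comp continuous_fst).mul c2).continuousOn
      have := intervalIntegral.hasDerivAt_integral_of_dominated_loc_of_deriv_le
        (F := fun τ x => f x * a (x, τ)) (F' := fun τ x => f x * da2 (x, τ))
        (x₀ := s) (a := (0:ℝ)) (b := Tstar) (bound := fun _ => C) (s := ball s 1) (μ := MeasureTheory.volume)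
        (ball_mem_nhds s one_pos)
        (Filter.Eventually.of_forall fun τ => (cF τ).aestronglyMeasurable)
        ((cF s).intervalIntegrable _ _)
        ((cF' s).aestronglyMeasurable)
        (ae_of_all _ fun x hx τ hτ => by
          have hmem : ((x, τ) : ℝ × ℝ) ∈ (Set.uIcc (0:ℝ) Tstar) ×ˢ (Set.Icc (s-1) (s+1)) := by
            refine ⟨Set.uIoc_subset_uIcc hx, ?_⟩
            have := abs_lt.1 (mem_ball_iff_norm.1 hτ)
            constructor <;> simp only [] <;> linarith [this.1, this.2]
          exact hC (x, τ) hmem)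
        (intervalIntegrable_const)
        (ae_of_all _ fun x hx τ hτ => (hd2 x τ).const_mul (f x))
      exact this.2
    -- Step B: integration by parts in x
    have stepB : (∫ x in (0:ℝ)..Tstar,
        (deriv f x * a (x, s) + f x * da1 (x, s))) = - (f 0 * a (0, s)) := by
      have hu : ∀ x ∈ Set.uIcc (0:ℝ) Tstar, HasDerivAt (fun x => f x * a (x, s))
          (deriv f x * a (x, s) + f x * da1 (x, s)) x := fun x _ =>
        ((hf.differentiable one_ne_zero x).hasDerivAt).mul (hd1 x s)
      have hint : IntervalIntegrable (fun x => deriv f x * a (x, s) + f x * da1 (x, s))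
          volume 0 Tstar := by
        apply Continuous.intervalIntegrable
        exact (hf'c.mul (haC.comp (continuous_id.prodMk continuous_const))).add
          (hfc.mul (c1.comp (continuous_id.prodMk continuous_const)))
      rw [intervalIntegral.integral_eq_sub_of_hasDerivAt hu hint,
        hend s hs]
      ring
    -- Step C: rewrite the integrand using the PDE
    have stepC : (∫ x in (0:ℝ)..Tstar, f x * da2 (x, s)) = g s := by
      have hsplit : ∀ x ∈ Set.uIcc (0:ℝ) Tstar,
          f x * da2 (x, s) = (deriv f x - h (x, s) * f x) * a (x, s)
            - (deriv f x * a (x, s) + f x * da1 (x, s)) := by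
        intro x hx
        rw [Set.uIcc_of_le hTs.le] at hx
        have := hpde x hx s hs
        have h2 : da2 (x, s) = -(a (x,s) * h (x,s)) - da1 (x, s) := by
          simp only [hda1, hda2] at *; linarith
        rw [h2]; ring
      rw [intervalIntegral.integral_congr hsplit]
      have i1 : IntervalIntegrable (fun x => (deriv f x - h (x, s) * f x) * a (x, s))
          volume 0 Tstar := by
        apply Continuous.intervalIntegrable
        exact ((hf'c.sub ((hh.comp (continuous_id.prodMk continuous_const)).mul hfc)).mul
          (haC.comp (continuous_id.prodMk continuous_const)))
      have i2 : IntervalIntegrable (fun x => deriv f x * a (x, s) + f x * da1 (x, s))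
          volume 0 Tstar := by
        apply Continuous.intervalIntegrable
        exact (hf'c.mul (haC.comp (continuous_id.prodMk continuous_const))).add
          (hfc.mul (c1.comp (continuous_id.prodMk continuous_const)))
      rw [intervalIntegral.integral_sub i1 i2, stepB]
      simp only [hg]
      rw [← hbc s hs]
      ring
    rw [← stepC]
    exact stepA
  -- continuity of g, hence interval integrability
  have gcont : Continuous g := by
    have cg1 : Continuous fun s => ∫ x in (0:ℝ)..Tstar,
        (deriv f x - h (x, s) * f x) * a (x, s) := by
      apply continuous_parametric_intervalIntegral_of_continuous'
      show Continuous (Function.uncurry fun s x => (deriv f x - h (x, s) * f x) * a (x, s))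
      have : Continuous fun p : ℝ × ℝ => ((p.2, p.1) : ℝ × ℝ) :=
        continuous_snd.prodMk continuous_fst
      exact (((hf'c.comp continuous_snd).sub ((hh.comp this).mul
        (hfc.comp continuous_snd))).mul (haC.comp this))
    have cg2 : Continuous fun s => ∫ x in (0:ℝ)..Tstar, n (x, s) * a (x, s) := by
      apply continuous_parametric_intervalIntegral_of_continuous'
      show Continuous (Function.uncurry fun s x => n (x, s) * a (x, s))
      have : Continuous fun p : ℝ × ℝ => ((p.2, p.1) : ℝ × ℝ) :=
        continuous_snd.prodMk continuous_fst
      exact ((hn.comp this).mul (haC.comp this))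
    exact cg1.add (continuous_const.mul cg2)
  have hgint : IntervalIntegrable g volume 0 t := gcont.intervalIntegrable _ _
  have hsub : Set.uIcc (0:ℝ) t ⊆ Set.Icc (0:ℝ) T := by
    rw [Set.uIcc_of_le htT.1]
    exact Set.Icc_subset_Icc le_rfl htT.2
  have := intervalIntegral.integral_eq_sub_of_hasDerivAt
    (f := fun τ => ∫ x in (0:ℝ)..Tstar, f x * a (x, τ)) (f' := g)
    (fun s hs => key s (hsub hs)) hgint
  rw [hg] at this
  linarith [this]
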